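/- Let 0 < μ < η, let G : cl(Ω) → ℝ be continuous with sup_{x ∈ cl(O_η)} |G(x) − F_v(x)| ≤ μ, and set O^μ_η = {x ∈ Ω \ (K_src ∪ K_dst) : G(x) < inf_{y ∈ Ω} F_v(y) + η}. If Γ* is nonempty, then Γ* ⊆ cl(O^μ_η), and for every x ∈ Γ* one has v^{cl(O^μ_η)}_s←(x) = v_s←(x) and v^{cl(O^μ_η)}_→d(x) = v_→d(x). -/

import Mathlib

open Set Metric MeasureTheory
open scoped ENNReal

noncomputable section

/-- Points of the `d`-dimensional Euclidean space. -/
abbrev Pt (d : ℕ) := EuclideanSpace ℝ (Fin d)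

/-- A control: a measurable map valued in the unit sphere. -/
def IsControl {d : ℕ} (α : ℝ → Pt d) : Prop :=
  Measurable α ∧ ∀ t, ‖α t‖ = 1

/-- Admissible trajectory (in integral form, i.e. an absolutely continuous solution of the
controlled ODE) with control `α`, constrained to stay in `K`, with direction sign `σ`
(`σ = 1`: forward dynamics `y' = f(y,α)·α`; `σ = -1`: reverse dynamics `y' = -f(y,α)·α`),
starting at `x`, with horizon `τ`. -/
def IsTrajCtrl {d : ℕ} (K : Set (Pt d)) (f : Pt d → Pt d → ℝ) (σ : ℝ)
    (x : Pt d) (τ : ℝ) (y α : ℝ → Pt d) : Prop :=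
  0 ≤ τ ∧ y 0 = x ∧ (∀ t ∈ Icc 0 τ, y t ∈ K) ∧ IsControl α ∧
    ∀ t ∈ Icc 0 τ, y t = x + ∫ s in (0:ℝ)..t, (σ * f (y s) (α s)) • α s

/-- Admissible trajectory, for some control. -/
def IsTraj {d : ℕ} (K : Set (Pt d)) (f : Pt d → Pt d → ℝ) (σ : ℝ)
    (x : Pt d) (τ : ℝ) (y : ℝ → Pt d) : Prop :=
  ∃ α, IsTrajCtrl K f σ x τ y α

/-- Set of horizons of admissible trajectories from `x` ending in `target`. -/
def reachTimes {d : ℕ} (K : Set (Pt d)) (f : Pt d → Pt d → ℝ) (σ : ℝ)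
    (target : Set (Pt d)) (x : Pt d) : Set ℝ :=
  {τ | ∃ y : ℝ → Pt d, IsTraj K f σ x τ y ∧ y τ ∈ target}

/-- Minimum time, `∞` if the target is unreachable (`inf ∅ = ∞`). -/
def minTime {d : ℕ} (K : Set (Pt d)) (f : Pt d → Pt d → ℝ) (σ : ℝ)
    (target : Set (Pt d)) (x : Pt d) : ℝ≥0∞ :=
  ⨅ τ ∈ reachTimes K f σ target x, ENNReal.ofReal τ

/-- Kruzkov transform `1 - e^{-T}`, with the convention `e^{-∞} = 0`. -/
def kruzkov (T : ℝ≥0∞) : ℝ := if T = ∞ then 1 else 1 - Real.exp (-T.toReal)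

/-- Value function (Kruzkov transform of the minimum time). -/
def val {d : ℕ} (K : Set (Pt d)) (f : Pt d → Pt d → ℝ) (σ : ℝ)
    (target : Set (Pt d)) (x : Pt d) : ℝ :=
  kruzkov (minTime K f σ target x)

/-- Geodesic points from `x`: points `y(t)` of optimal trajectories from `x` to `target`. -/
def geodPts {d : ℕ} (K : Set (Pt d)) (f : Pt d → Pt d → ℝ) (σ : ℝ)
    (target : Set (Pt d)) (x : Pt d) : Set (Pt d) :=
  {p | ∃ τ y, IsTraj K f σ x τ y ∧ y τ ∈ target ∧
    ENNReal.ofReal τ = minTime K f σ target x ∧ ∃ t ∈ Icc 0 τ, p = y t}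

/-- δ-geodesic points from `x`: points `y(t)` of δ-optimal trajectories from `x` to `target`. -/
def deltaGeodPts {d : ℕ} (K : Set (Pt d)) (f : Pt d → Pt d → ℝ) (σ : ℝ)
    (target : Set (Pt d)) (x : Pt d) (δ : ℝ) : Set (Pt d) :=
  {p | ∃ τ y, IsTraj K f σ x τ y ∧ y τ ∈ target ∧
    1 - Real.exp (-τ) ≤ val K f σ target x + δ ∧ ∃ t ∈ Icc 0 τ, p = y t}

/-- The setting of the minimum time problem: a nonempty bounded open domain `Ω ⊆ ℝ^d` with
`d ≥ 1`, a positive continuous bounded Lipschitz speed function `f` on `cl(Ω) × S₁`, and two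
disjoint nonempty compact subsets `K_src, K_dst` of `Ω`. -/
structure Setting (d : ℕ) where
  Ω : Set (Pt d)
  f : Pt d → Pt d → ℝ
  Mf : ℝ
  Lf : ℝ
  Lfa : ℝ
  Ksrc : Set (Pt d)
  Kdst : Set (Pt d)
  hd : 1 ≤ d
  hΩopen : IsOpen Ω
  hΩbdd : Bornology.IsBounded Ω
  hΩne : Ω.Nonempty
  hfcont : ContinuousOn (fun p : Pt d × Pt d => f p.1 p.2) (closure Ω ×ˢ sphere (0 : Pt d) 1)
  hfpos : ∀ x ∈ closure Ω, ∀ a ∈ sphere (0 : Pt d) 1, 0 < f x a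
  hfbdd : ∀ x ∈ closure Ω, ∀ a ∈ sphere (0 : Pt d) 1, f x a ≤ Mf
  hfLipx : ∀ a ∈ sphere (0 : Pt d) 1, ∀ x ∈ closure Ω, ∀ x' ∈ closure Ω,
    |f x a - f x' a| ≤ Lf * ‖x - x'‖
  hfLipa : ∀ x ∈ closure Ω, ∀ a ∈ sphere (0 : Pt d) 1, ∀ a' ∈ sphere (0 : Pt d) 1,
    |f x a - f x a'| ≤ Lfa * ‖a - a'‖
  hKsrcComp : IsCompact Ksrc
  hKdstComp : IsCompact Kdst
  hKsrcNe : Ksrc.Nonempty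
  hKdstNe : Kdst.Nonempty
  hKsrcSub : Ksrc ⊆ Ω
  hKdstSub : Kdst ⊆ Ω
  hKdisj : Disjoint Ksrc Kdst

namespace Setting

variable {d : ℕ} (S : Setting d)

/-- Minimum time to destination `T_→d`. -/
def Td (x : Pt d) : ℝ≥0∞ := minTime (closure S.Ω) S.f 1 S.Kdst x

/-- Minimum time from source `T_s←` (reverse dynamics). -/
def Ts (x : Pt d) : ℝ≥0∞ := minTime (closure S.Ω) S.f (-1) S.Ksrc x

/-- Value function to destination `v_→d = 1 - e^{-T_→d}`. -/
def vd (x : Pt d) : ℝ := val (closure S.Ω) S.f 1 S.Kdst x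

/-- Value function from source `v_s← = 1 - e^{-T_s←}`. -/
def vs (x : Pt d) : ℝ := val (closure S.Ω) S.f (-1) S.Ksrc x

/-- State-constrained value function to destination: trajectories confined to `K`. -/
def vdC (K : Set (Pt d)) (x : Pt d) : ℝ := val K S.f 1 S.Kdst x

/-- State-constrained value function from source: trajectories confined to `K`. -/
def vsC (K : Set (Pt d)) (x : Pt d) : ℝ := val K S.f (-1) S.Ksrc x

/-- `F_v(x) = v_s←(x) + v_→d(x) − v_s←(x)·v_→d(x)`. -/
def Fv (x : Pt d) : ℝ := S.vs x + S.vd x - S.vs x * S.vd x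

/-- The neighborhood `O_η` of the optimal trajectories. -/
def Oset (η : ℝ) : Set (Pt d) :=
  {x ∈ S.Ω \ (S.Ksrc ∪ S.Kdst) | S.Fv x < sInf (S.Fv '' S.Ω) + η}

/-- `X_src = Argmin_{x ∈ K_src} v_→d(x)`. -/
def Xsrc : Set (Pt d) := {x ∈ S.Ksrc | ∀ z ∈ S.Ksrc, S.vd x ≤ S.vd z}

/-- `X_dst = Argmin_{x ∈ K_dst} v_s←(x)`. -/
def Xdst : Set (Pt d) := {x ∈ S.Kdst | ∀ z ∈ S.Kdst, S.vs x ≤ S.vs z}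

/-- The set of forward geodesic points `∪_{x ∈ X_src} Γ*_x`. -/
def GammaFwd : Set (Pt d) := ⋃ x ∈ S.Xsrc, geodPts (closure S.Ω) S.f 1 S.Kdst x

/-- The set of reverse geodesic points `∪_{x ∈ X_dst} Γ̃*_x`. -/
def GammaRev : Set (Pt d) := ⋃ x ∈ S.Xdst, geodPts (closure S.Ω) S.f (-1) S.Ksrc x

/-- `v* = inf_{x ∈ K_src} v_→d(x)`. -/
def vStar : ℝ := sInf (S.vd '' S.Ksrc)

/-- `X_src^δ = {x ∈ ∂K_src : v_→d(x) ≤ v* + δ}`. -/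
def XsrcD (δ : ℝ) : Set (Pt d) := {x ∈ frontier S.Ksrc | S.vd x ≤ S.vStar + δ}

/-- `X_dst^δ = {x ∈ ∂K_dst : v_s←(x) ≤ v* + δ}`. -/
def XdstD (δ : ℝ) : Set (Pt d) := {x ∈ frontier S.Kdst | S.vs x ≤ S.vStar + δ}

/-- The set of forward δ-geodesic points `Γ^δ`. -/
def GammaD (δ : ℝ) : Set (Pt d) :=
  ⋃ δ' ∈ Icc (0:ℝ) δ, ⋃ x ∈ S.XsrcD (δ - δ'), deltaGeodPts (closure S.Ω) S.f 1 S.Kdst x δ'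

/-- The set of reverse δ-geodesic points. -/
def GammaDRev (δ : ℝ) : Set (Pt d) :=
  ⋃ δ' ∈ Icc (0:ℝ) δ, ⋃ x ∈ S.XdstD (δ - δ'), deltaGeodPts (closure S.Ω) S.f (-1) S.Ksrc x δ'

end Setting

namespace Aux

/-- `e^{-T}` with `e^{-∞} = 0`. -/
noncomputable def expNeg (T : ℝ≥0∞) : ℝ := if T = ∞ then 0 else Real.exp (-T.toReal)

lemma expNeg_nonneg (T : ℝ≥0∞) : 0 ≤ expNeg T := by
  unfold expNeg; split
  · exact le_refl 0
  · positivity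

lemma kruzkov_eq (T : ℝ≥0∞) : kruzkov T = 1 - expNeg T := by
  unfold kruzkov expNeg; split <;> simp

lemma expNeg_ofReal {τ : ℝ} (h : 0 ≤ τ) : expNeg (ENNReal.ofReal τ) = Real.exp (-τ) := by
  unfold expNeg; rw [if_neg ENNReal.ofReal_ne_top, ENNReal.toReal_ofReal h]

lemma expNeg_lt {T T' : ℝ≥0∞} (h : T < T') : expNeg T' < expNeg T := by
  have hT : T ≠ ∞ := h.ne_top
  unfold expNeg
  rw [if_neg hT]
  by_cases hT' : T' = ∞
  · rw [if_pos hT']; positivity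
  · rw [if_neg hT']
    exact Real.exp_lt_exp.2 (neg_lt_neg ((ENNReal.toReal_lt_toReal hT hT').2 h))

lemma expNeg_anti {T T' : ℝ≥0∞} (h : T ≤ T') : expNeg T' ≤ expNeg T := by
  rcases eq_or_lt_of_le h with rfl | h
  · exact le_refl _
  · exact (expNeg_lt h).le

lemma le_of_expNeg_le {T T' : ℝ≥0∞} (h : expNeg T' ≤ expNeg T) : T ≤ T' := by
  by_contra hc
  exact absurd h (not_le.2 (expNeg_lt (not_le.1 hc)))

lemma expNeg_add (T T' : ℝ≥0∞) : expNeg (T + T') = expNeg T * expNeg T' := by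
  by_cases hT : T = ∞
  · simp [hT, expNeg]
  by_cases hT' : T' = ∞
  · simp [hT', expNeg]
  unfold expNeg
  rw [if_neg hT, if_neg hT', if_neg (by simp [hT, hT'])]
  rw [ENNReal.toReal_add hT hT', ← Real.exp_add]
  ring_nf

lemma mem_reachTimes {d : ℕ} {K : Set (Pt d)} {f : Pt d → Pt d → ℝ} {σ : ℝ}
    {target : Set (Pt d)} {x : Pt d} {τ : ℝ} {y : ℝ → Pt d}
    (h : IsTraj K f σ x τ y) (he : y τ ∈ target) : τ ∈ reachTimes K f σ target x :=
  ⟨y, h, he⟩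

lemma minTime_le {d : ℕ} {K : Set (Pt d)} {f : Pt d → Pt d → ℝ} {σ : ℝ}
    {target : Set (Pt d)} {x : Pt d} {τ : ℝ}
    (h : τ ∈ reachTimes K f σ target x) : minTime K f σ target x ≤ ENNReal.ofReal τ :=
  iInf₂_le τ h

lemma le_minTime {d : ℕ} {K : Set (Pt d)} {f : Pt d → Pt d → ℝ} {σ : ℝ}
    {target : Set (Pt d)} {x : Pt d} {c : ℝ≥0∞}
    (h : ∀ τ ∈ reachTimes K f σ target x, c ≤ ENNReal.ofReal τ) :
    c ≤ minTime K f σ target x :=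
  le_iInf₂ h

lemma reachTimes_mono {d : ℕ} {K K' : Set (Pt d)} {f : Pt d → Pt d → ℝ} {σ : ℝ}
    {target : Set (Pt d)} {x : Pt d} (hKK' : K ⊆ K') :
    reachTimes K f σ target x ⊆ reachTimes K' f σ target x := by
  rintro τ ⟨y, ⟨α, h1, h2, h3, h4, h5⟩, he⟩
  exact ⟨y, ⟨α, h1, h2, fun t ht => hKK' (h3 t ht), h4, h5⟩, he⟩

lemma minTime_anti {d : ℕ} {K K' : Set (Pt d)} {f : Pt d → Pt d → ℝ} {σ : ℝ}
    {target : Set (Pt d)} {x : Pt d} (hKK' : K ⊆ K') :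
    minTime K' f σ target x ≤ minTime K f σ target x :=
  le_minTime fun τ hτ => minTime_le (reachTimes_mono hKK' hτ)

lemma val_eq {d : ℕ} (K : Set (Pt d)) (f : Pt d → Pt d → ℝ) (σ : ℝ)
    (target : Set (Pt d)) (x : Pt d) :
    val K f σ target x = 1 - expNeg (minTime K f σ target x) := kruzkov_eq _

lemma zero_mem_reachTimes {d : ℕ} (hd : 1 ≤ d) {K : Set (Pt d)} {f : Pt d → Pt d → ℝ}
    {σ : ℝ} {target : Set (Pt d)} {x : Pt d}
    (hxK : x ∈ K) (hxt : x ∈ target) : (0:ℝ) ∈ reachTimes K f σ target x := by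
  refine ⟨fun _ => x, ⟨fun _ => EuclideanSpace.single ⟨0, hd⟩ (1:ℝ), ?_⟩, hxt⟩
  refine ⟨le_refl 0, rfl, fun t _ => hxK,
    ⟨measurable_const, fun t => by simp [EuclideanSpace.norm_single]⟩, ?_⟩
  intro t ht
  have : t = 0 := le_antisymm ht.2 ht.1
  subst this; simp

end Aux

namespace Aux

lemma _root_.Setting.aemeas_integrand {d : ℕ} (S : Setting d) {σ : ℝ} {y α : ℝ → Pt d}
    {μ' : MeasureTheory.Measure ℝ}
    (hy : AEMeasurable y μ') (hαm : Measurable α)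
    (hmem : ∀ᵐ s ∂μ', y s ∈ closure S.Ω)
    (hα1 : ∀ s, ‖α s‖ = 1) :
    AEMeasurable (fun s => (σ * S.f (y s) (α s)) • α s) μ' := by
  set C : Set (Pt d × Pt d) := closure S.Ω ×ˢ sphere (0:Pt d) 1 with hC
  have hCc : IsClosed C := isClosed_closure.prod isClosed_sphere
  obtain ⟨F, hF⟩ := ContinuousMap.exists_restrict_eq (Y := ℝ) hCc
    ⟨C.restrict (fun p => S.f p.1 p.2), S.hfcont.restrict⟩
  have hFeq : ∀ p ∈ C, F p = S.f p.1 p.2 := by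
    intro p hp
    exact congrFun (congrArg ContinuousMap.toFun hF) ⟨p, hp⟩
  have h1 : AEMeasurable (fun s => (σ * F (y s, α s)) • α s) μ' := by
    exact (aemeasurable_const.mul
      (F.continuous.measurable.comp_aemeasurable (hy.prodMk hαm.aemeasurable))).smul
      hαm.aemeasurable
  refine h1.congr ?_
  filter_upwards [hmem] with s hs
  rw [hFeq (y s, α s) ⟨hs, mem_sphere_zero_iff_norm.2 (hα1 s)⟩]

lemma _root_.Setting.integrand_norm_le {d : ℕ} (S : Setting d) {σ : ℝ} (hσ : |σ| = 1)
    {p a : Pt d} (hp : p ∈ closure S.Ω) (ha : ‖a‖ = 1) :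
    ‖(σ * S.f p a) • a‖ ≤ S.Mf := by
  have ha' : a ∈ sphere (0:Pt d) 1 := mem_sphere_zero_iff_norm.2 ha
  have h1 := S.hfpos p hp a ha'
  have h2 := S.hfbdd p hp a ha'
  rw [norm_smul, ha, mul_one, Real.norm_eq_abs, abs_mul, hσ, one_mul, abs_of_pos h1]
  exact h2

lemma _root_.Setting.traj_reg {d : ℕ} (S : Setting d) {K : Set (Pt d)} (hK : K ⊆ closure S.Ω)
    {σ τ : ℝ} {y α : ℝ → Pt d} (hσ : |σ| = 1)
    (hτ : 0 ≤ τ) (hyK : ∀ t ∈ Icc 0 τ, y t ∈ K) (hαm : Measurable α)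
    (hα1 : ∀ t, ‖α t‖ = 1)
    (hid : ∀ t ∈ Icc 0 τ, y t = y 0 + ∫ s in (0:ℝ)..t, (σ * S.f (y s) (α s)) • α s) :
    (∀ t ∈ Icc (0:ℝ) τ, IntervalIntegrable (fun s => (σ * S.f (y s) (α s)) • α s) volume 0 t)
    ∧ ContinuousOn y (Icc 0 τ) := by
  set x := y 0 with hx
  set g : ℝ → Pt d := fun s => (σ * S.f (y s) (α s)) • α s with hg
  have hgb : ∀ s ∈ Icc (0:ℝ) τ, ‖g s‖ ≤ S.Mf := fun s hs =>
    S.integrand_norm_le hσ (hK (hyK s hs)) (hα1 s)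
  have hMf : 0 ≤ S.Mf := le_trans (norm_nonneg _) (hgb 0 ⟨le_refl 0, hτ⟩)
  set E : Set ℝ := {t | t ∈ Icc (0:ℝ) τ ∧ IntervalIntegrable g volume 0 t} with hE
  have hE0 : (0:ℝ) ∈ E := ⟨⟨le_refl 0, hτ⟩, IntervalIntegrable.refl⟩
  have hEdc : ∀ t ∈ E, ∀ t', 0 ≤ t' → t' ≤ t → t' ∈ E := by
    rintro t ⟨htI, htInt⟩ t' h0 hle
    exact ⟨⟨h0, hle.trans htI.2⟩, htInt.mono_set (by
      rw [uIcc_of_le h0, uIcc_of_le (h0.trans hle)]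
      exact Icc_subset_Icc (le_refl _) hle)⟩
  have hEbdd : BddAbove E := ⟨τ, fun t ht => ht.1.2⟩
  have hEne : E.Nonempty := ⟨0, hE0⟩
  set T := sSup E with hT
  have hT0 : 0 ≤ T := le_csSup hEbdd hE0
  have hTτ : T ≤ τ := csSup_le hEne fun t ht => ht.1.2
  have hlt : ∀ t, 0 ≤ t → t < T → t ∈ E := by
    intro t h0 hlt
    obtain ⟨e, he, hte⟩ := exists_lt_of_lt_csSup hEne hlt
    exact hEdc e he t h0 hte.le
  have hdiff : ∀ t₁ ∈ E, ∀ t₂ ∈ E, t₁ ≤ t₂ → ‖y t₂ - y t₁‖ ≤ S.Mf * (t₂ - t₁) := by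
    rintro t₁ ⟨ht₁I, ht₁⟩ t₂ ⟨ht₂I, ht₂⟩ hle
    have e0 : x + (∫ s in (0:ℝ)..t₂, g s) - (x + ∫ s in (0:ℝ)..t₁, g s)
        = (∫ s in (0:ℝ)..t₂, g s) - (∫ s in (0:ℝ)..t₁, g s) := by abel
    have e1 : y t₂ - y t₁ = ∫ s in t₁..t₂, g s := by
      rw [hid t₂ ht₂I, hid t₁ ht₁I]
      rw [e0, intervalIntegral.integral_interval_sub_left ht₂ ht₁]
    rw [e1]
    calc ‖∫ s in t₁..t₂, g s‖ ≤ S.Mf * |t₂ - t₁| := by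
          apply intervalIntegral.norm_integral_le_of_norm_le_const
          intro s hs
          rw [uIoc_of_le hle] at hs
          exact hgb s ⟨ht₁I.1.trans hs.1.le, hs.2.trans ht₂I.2⟩
      _ = S.Mf * (t₂ - t₁) := by rw [abs_of_nonneg (sub_nonneg.2 hle)]
  have lipCont : ∀ A : Set ℝ, A ⊆ E → ContinuousOn y A := by
    intro A hA
    refine (LipschitzOnWith.of_dist_le_mul (K := Real.toNNReal S.Mf) ?_).continuousOn
    intro a ha b hb
    rw [Real.coe_toNNReal _ hMf]
    rcases le_total a b with hab | hab
    · rw [dist_comm (y a), dist_eq_norm, Real.dist_eq, abs_sub_comm,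
        abs_of_nonneg (sub_nonneg.2 hab)]
      exact hdiff a (hA ha) b (hA hb) hab
    · rw [dist_eq_norm, Real.dist_eq, abs_of_nonneg (sub_nonneg.2 hab)]
      exact hdiff b (hA hb) a (hA ha) hab
  have hIcoE : Ico (0:ℝ) T ⊆ E := fun t ht => hlt t ht.1 ht.2
  have hTE : T ∈ E := by
    refine ⟨⟨hT0, hTτ⟩, ?_⟩
    rw [intervalIntegrable_iff_integrableOn_Ioc_of_le hT0]
    have hmemIoo : ∀ᵐ s ∂(volume.restrict (Ioo (0:ℝ) T)), y s ∈ closure S.Ω := by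
      rw [ae_restrict_iff' measurableSet_Ioo]
      exact Filter.Eventually.of_forall fun s hs => hK (hyK s ⟨hs.1.le, hs.2.le.trans hTτ⟩)
    have hyae : AEMeasurable y (volume.restrict (Ioo (0:ℝ) T)) :=
      (lipCont _ (fun t ht => hIcoE ⟨ht.1.le, ht.2⟩)).aemeasurable measurableSet_Ioo
    have hgae : AEMeasurable g (volume.restrict (Ioo (0:ℝ) T)) :=
      S.aemeas_integrand hyae hαm hmemIoo hα1
    have hbdd : ∀ᵐ s ∂(volume.restrict (Ioo (0:ℝ) T)), ‖g s‖ ≤ S.Mf := by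
      rw [ae_restrict_iff' measurableSet_Ioo]
      exact Filter.Eventually.of_forall fun s hs => hgb s ⟨hs.1.le, hs.2.le.trans hTτ⟩
    have hInt : IntegrableOn g (Ioo (0:ℝ) T) volume :=
      ⟨hgae.aestronglyMeasurable,
        MeasureTheory.HasFiniteIntegral.restrict_of_bounded (C := S.Mf) (by simp) hbdd⟩
    have : volume.restrict (Ioc (0:ℝ) T) = volume.restrict (Ioo (0:ℝ) T) :=
      MeasureTheory.Measure.restrict_congr_set (MeasureTheory.Ioo_ae_eq_Ioc).symm
    unfold IntegrableOn
    rw [this]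
    exact hInt
  have hallE : ∀ t ∈ Icc (0:ℝ) τ, t ∈ E := by
    rcases eq_or_lt_of_le hTτ with hEq | hTlt
    · intro t ht
      rcases eq_or_lt_of_le ht.2 with rfl | h
      · rw [← hEq]; exact hTE
      · exact hlt t ht.1 (by rw [hEq]; exact h)
    · exfalso
      -- every t in (T, τ] is not in E, hence y t = x there
      have hyconst : ∀ t ∈ Ioc T τ, y t = x := by
        intro t ht
        have htE : t ∉ E := fun hmem => absurd (le_csSup hEbdd hmem) (not_le.2 ht.1)
        have : ¬ IntervalIntegrable g volume 0 t := fun hi => htE ⟨⟨hT0.trans ht.1.le, ht.2⟩, hi⟩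
        rw [hid t ⟨hT0.trans ht.1.le, ht.2⟩, intervalIntegral.integral_undef this, add_zero]
      have hyae2 : AEMeasurable y (volume.restrict (Ioc T τ)) := by
        refine (aemeasurable_const (b := x)).congr ?_
        rw [Filter.EventuallyEq, ae_restrict_iff' measurableSet_Ioc]
        exact Filter.Eventually.of_forall fun s hs => (hyconst s hs).symm
      have hyae1 : AEMeasurable y (volume.restrict (Ioc (0:ℝ) T)) := by
        have : volume.restrict (Ioc (0:ℝ) T) = volume.restrict (Ioo (0:ℝ) T) :=
          MeasureTheory.Measure.restrict_congr_set (MeasureTheory.Ioo_ae_eq_Ioc).symm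
        rw [this]
        exact (lipCont _ (fun t ht => hIcoE ⟨ht.1.le, ht.2⟩)).aemeasurable measurableSet_Ioo
      have hyae : AEMeasurable y (volume.restrict (Ioc (0:ℝ) τ)) := by
        rw [← Ioc_union_Ioc_eq_Ioc hT0 hTτ,
          MeasureTheory.Measure.restrict_union (Ioc_disjoint_Ioc_of_le le_rfl) measurableSet_Ioc]
        exact hyae1.add_measure hyae2
      have hmemτ : ∀ᵐ s ∂(volume.restrict (Ioc (0:ℝ) τ)), y s ∈ closure S.Ω := by
        rw [ae_restrict_iff' measurableSet_Ioc]
        exact Filter.Eventually.of_forall fun s hs => hK (hyK s ⟨hs.1.le, hs.2⟩)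
      have hgae : AEMeasurable g (volume.restrict (Ioc (0:ℝ) τ)) :=
        S.aemeas_integrand hyae hαm hmemτ hα1
      have hbdd : ∀ᵐ s ∂(volume.restrict (Ioc (0:ℝ) τ)), ‖g s‖ ≤ S.Mf := by
        rw [ae_restrict_iff' measurableSet_Ioc]
        exact Filter.Eventually.of_forall fun s hs => hgb s ⟨hs.1.le, hs.2⟩
      have hInt : IntegrableOn g (Ioc (0:ℝ) τ) volume :=
        ⟨hgae.aestronglyMeasurable,
          MeasureTheory.HasFiniteIntegral.restrict_of_bounded (C := S.Mf) (by simp) hbdd⟩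
      have hτE : τ ∈ E :=
        ⟨⟨hτ, le_refl τ⟩, (intervalIntegrable_iff_integrableOn_Ioc_of_le hτ).2 hInt⟩
      exact absurd (le_csSup hEbdd hτE) (not_le.2 hTlt)
  exact ⟨fun t ht => (hallE t ht).2, lipCont _ (fun t ht => hallE t ht)⟩

end Aux

namespace Aux

variable {d : ℕ} {K : Set (Pt d)} {f : Pt d → Pt d → ℝ} {σ : ℝ}

lemma traj_restrict {x : Pt d} {τ : ℝ} {y α : ℝ → Pt d}
    (h : IsTrajCtrl K f σ x τ y α) {t : ℝ} (ht : t ∈ Icc 0 τ) :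
    IsTrajCtrl K f σ x t y α := by
  obtain ⟨hτ, hy0, hyK, hc, hid⟩ := h
  have hsub : Icc (0:ℝ) t ⊆ Icc 0 τ := Icc_subset_Icc (le_refl _) ht.2
  exact ⟨ht.1, hy0, fun u hu => hyK u (hsub hu), hc, fun u hu => hid u (hsub hu)⟩

lemma traj_shift {x : Pt d} {τ : ℝ} {y α : ℝ → Pt d}
    (h : IsTrajCtrl K f σ x τ y α)
    (hInt : ∀ u ∈ Icc (0:ℝ) τ,
      IntervalIntegrable (fun s => (σ * f (y s) (α s)) • α s) volume 0 u)
    {t : ℝ} (ht : t ∈ Icc 0 τ) :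
    IsTrajCtrl K f σ (y t) (τ - t) (fun s => y (t + s)) (fun s => α (t + s)) := by
  obtain ⟨hτ, hy0, hyK, ⟨hαm, hα1⟩, hid⟩ := h
  set g : ℝ → Pt d := fun s => (σ * f (y s) (α s)) • α s with hg
  refine ⟨by linarith [ht.2], by simp, ?_, ⟨hαm.comp (measurable_id.const_add t),
    fun s => hα1 _⟩, ?_⟩
  · intro s hs
    exact hyK (t + s) ⟨by linarith [ht.1, hs.1], by linarith [hs.2]⟩
  · intro s hs
    have hts : t + s ∈ Icc 0 τ := ⟨by linarith [ht.1, hs.1], by linarith [hs.2]⟩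
    have e1 : y (t + s) - y t = ∫ u in t..(t + s), g u := by
      rw [hid (t + s) hts, hid t ht]
      have e0 : x + (∫ u in (0:ℝ)..(t+s), g u) - (x + ∫ u in (0:ℝ)..t, g u)
          = (∫ u in (0:ℝ)..(t+s), g u) - (∫ u in (0:ℝ)..t, g u) := by abel
      rw [e0, intervalIntegral.integral_interval_sub_left (hInt _ hts) (hInt _ ht)]
    have e2 : (∫ u in (0:ℝ)..s, g (t + u)) = ∫ u in t..(t + s), g u := by
      rw [intervalIntegral.integral_comp_add_left g t, add_zero]
    show y (t + s) = y t + ∫ u in (0:ℝ)..s, g (t + u)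
    rw [e2, ← e1]
    abel

lemma traj_reverse {x : Pt d} {τ : ℝ} {y α : ℝ → Pt d}
    (h : IsTrajCtrl K f σ x τ y α)
    (hInt : ∀ u ∈ Icc (0:ℝ) τ,
      IntervalIntegrable (fun s => (σ * f (y s) (α s)) • α s) volume 0 u)
    {t : ℝ} (ht : t ∈ Icc 0 τ) :
    IsTrajCtrl K f (-σ) (y t) t (fun s => y (t - s)) (fun s => α (t - s)) := by
  obtain ⟨hτ, hy0, hyK, ⟨hαm, hα1⟩, hid⟩ := h
  set g : ℝ → Pt d := fun s => (σ * f (y s) (α s)) • α s with hg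
  refine ⟨ht.1, by simp, ?_, ⟨hαm.comp (measurable_const.sub measurable_id),
    fun s => hα1 _⟩, ?_⟩
  · intro s hs
    exact hyK (t - s) ⟨by linarith [hs.2], by linarith [hs.1, ht.2]⟩
  · intro s hs
    have hts : t - s ∈ Icc 0 τ := ⟨by linarith [hs.2], by linarith [hs.1, ht.2]⟩
    have e1 : y t - y (t - s) = ∫ u in (t - s)..t, g u := by
      rw [hid (t - s) hts, hid t ht]
      have e0 : x + (∫ u in (0:ℝ)..t, g u) - (x + ∫ u in (0:ℝ)..(t - s), g u)
          = (∫ u in (0:ℝ)..t, g u) - (∫ u in (0:ℝ)..(t - s), g u) := by abel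
      rw [e0, intervalIntegral.integral_interval_sub_left (hInt _ ht) (hInt _ hts)]
    have e2 : (∫ u in (0:ℝ)..s, g (t - u)) = ∫ u in (t - s)..t, g u := by
      rw [intervalIntegral.integral_comp_sub_left g t, sub_zero]
    have e3 : (fun u => ((-σ) * f (y (t - u)) (α (t - u))) • α (t - u))
        = fun u => -(g (t - u)) := by
      funext u
      rw [hg]
      simp [neg_mul, neg_smul]
    show y (t - s) = y t + ∫ u in (0:ℝ)..s, ((-σ) * f (y (t - u)) (α (t - u))) • α (t - u)
    rw [e3, intervalIntegral.integral_neg, e2, ← e1]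
    abel

lemma traj_concat {x₁ : Pt d} {τ₁ τ₂ : ℝ} {y₁ α₁ y₂ α₂ : ℝ → Pt d}
    (h₁ : IsTrajCtrl K f σ x₁ τ₁ y₁ α₁) (h₂ : IsTrajCtrl K f σ (y₁ τ₁) τ₂ y₂ α₂)
    (hInt₁ : ∀ u ∈ Icc (0:ℝ) τ₁,
      IntervalIntegrable (fun s => (σ * f (y₁ s) (α₁ s)) • α₁ s) volume 0 u)
    (hInt₂ : ∀ u ∈ Icc (0:ℝ) τ₂,
      IntervalIntegrable (fun s => (σ * f (y₂ s) (α₂ s)) • α₂ s) volume 0 u) :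
    ∃ y, IsTraj K f σ x₁ (τ₁ + τ₂) y ∧ y (τ₁ + τ₂) = y₂ τ₂ := by
  obtain ⟨hτ₁, hy₁0, hy₁K, ⟨hα₁m, hα₁1⟩, hid₁⟩ := h₁
  obtain ⟨hτ₂, hy₂0, hy₂K, ⟨hα₂m, hα₂1⟩, hid₂⟩ := h₂
  set g₁ : ℝ → Pt d := fun s => (σ * f (y₁ s) (α₁ s)) • α₁ s with hg₁
  set g₂ : ℝ → Pt d := fun s => (σ * f (y₂ s) (α₂ s)) • α₂ s with hg₂
  set y : ℝ → Pt d := fun s => if s ≤ τ₁ then y₁ s else y₂ (s - τ₁) with hy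
  set α : ℝ → Pt d := fun s => if s < τ₁ then α₁ s else α₂ (s - τ₁) with hα
  set G : ℝ → Pt d := fun s => (σ * f (y s) (α s)) • α s with hG
  have hne : ∀ᵐ s : ℝ ∂volume, s ≠ τ₁ := by
    rw [MeasureTheory.ae_iff]
    simpa using MeasureTheory.measure_singleton (α := ℝ) τ₁
  have hGg₁ : ∀ s, s < τ₁ → G s = g₁ s := by
    intro s hs
    simp only [hG, hy, hα, if_pos hs, if_pos hs.le]
    rfl
  have hGg₂ : ∀ s, τ₁ < s → G s = g₂ (s - τ₁) := by
    intro s hs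
    simp only [hG, hy, hα, if_neg (not_lt.2 hs.le), if_neg (not_le.2 hs)]
    rfl
  have hend : y (τ₁ + τ₂) = y₂ τ₂ := by
    by_cases hc : τ₁ + τ₂ ≤ τ₁
    · have hτ₂0 : τ₂ = 0 := le_antisymm (by linarith) hτ₂
      simp only [hy, if_pos hc, hτ₂0, add_zero, if_pos (le_refl τ₁)]
      exact hy₂0.symm
    · simp only [hy, if_neg hc, add_sub_cancel_left]
  refine ⟨y, ⟨α, ⟨by linarith, ?_, ?_, ⟨?_, ?_⟩, ?_⟩⟩, hend⟩
  · simp only [hy, if_pos hτ₁]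
    exact hy₁0
  · intro s hs
    by_cases hc : s ≤ τ₁
    · simp only [hy, if_pos hc]
      exact hy₁K s ⟨hs.1, hc⟩
    · simp only [hy, if_neg hc]
      exact hy₂K (s - τ₁) ⟨by linarith [not_le.1 hc], by linarith [hs.2]⟩
  · exact Measurable.ite (measurableSet_lt measurable_id measurable_const) hα₁m
      (hα₂m.comp (measurable_id.sub_const τ₁))
  · intro s
    by_cases hc : s < τ₁
    · simp only [hα, if_pos hc]; exact hα₁1 s
    · simp only [hα, if_neg hc]; exact hα₂1 _
  · intro t htI
    by_cases hc : t ≤ τ₁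
    · have htI₁ : t ∈ Icc 0 τ₁ := ⟨htI.1, hc⟩
      have hcongr : (∫ s in (0:ℝ)..t, G s) = ∫ s in (0:ℝ)..t, g₁ s := by
        apply intervalIntegral.integral_congr_ae
        filter_upwards [hne] with s hs hsI
        rw [uIoc_of_le htI.1] at hsI
        exact hGg₁ s (lt_of_le_of_ne (hsI.2.trans hc) hs)
      show y t = x₁ + ∫ s in (0:ℝ)..t, G s
      rw [hcongr]
      simp only [hy, if_pos hc]
      exact hid₁ t htI₁
    · push_neg at hc
      have ht₂ : t - τ₁ ∈ Icc 0 τ₂ := ⟨by linarith, by linarith [htI.2]⟩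
      have hIG₁ : IntervalIntegrable G volume 0 τ₁ := by
        rw [intervalIntegrable_iff_integrableOn_Ioc_of_le hτ₁]
        refine MeasureTheory.Integrable.congr
          ((intervalIntegrable_iff_integrableOn_Ioc_of_le hτ₁).1 (hInt₁ τ₁ ⟨hτ₁, le_refl _⟩)) ?_
        rw [Filter.EventuallyEq, MeasureTheory.ae_restrict_iff' measurableSet_Ioc]
        filter_upwards [hne] with s hs hsI
        exact (hGg₁ s (lt_of_le_of_ne hsI.2 hs)).symm
      have hIg₂' : IntervalIntegrable (fun s => g₂ (s - τ₁)) volume τ₁ t := by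
        have := (hInt₂ (t - τ₁) ht₂).comp_sub_right τ₁
        simpa using this
      have hIG₂ : IntervalIntegrable G volume τ₁ t := by
        refine hIg₂'.congr_ae ?_
        rw [Filter.EventuallyEq, MeasureTheory.ae_restrict_iff' measurableSet_uIoc]
        refine Filter.Eventually.of_forall fun s hsI => ?_
        rw [uIoc_of_le hc.le] at hsI
        exact (hGg₂ s hsI.1).symm
      have hsplit : (∫ s in (0:ℝ)..t, G s)
          = (∫ s in (0:ℝ)..τ₁, G s) + ∫ s in τ₁..t, G s :=
        (intervalIntegral.integral_add_adjacent_intervals hIG₁ hIG₂).symm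
      have hc1 : (∫ s in (0:ℝ)..τ₁, G s) = ∫ s in (0:ℝ)..τ₁, g₁ s := by
        apply intervalIntegral.integral_congr_ae
        filter_upwards [hne] with s hs hsI
        rw [uIoc_of_le hτ₁] at hsI
        exact hGg₁ s (lt_of_le_of_ne hsI.2 hs)
      have hc2 : (∫ s in τ₁..t, G s) = ∫ s in τ₁..t, g₂ (s - τ₁) := by
        apply intervalIntegral.integral_congr_ae
        refine Filter.Eventually.of_forall fun s hsI => ?_
        rw [uIoc_of_le hc.le] at hsI
        exact hGg₂ s hsI.1
      have hc3 : (∫ s in τ₁..t, g₂ (s - τ₁)) = ∫ s in (0:ℝ)..(t - τ₁), g₂ s := by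
        rw [intervalIntegral.integral_comp_sub_right g₂ τ₁, sub_self]
      show y t = x₁ + ∫ s in (0:ℝ)..t, G s
      rw [hsplit, hc1, hc2, hc3]
      simp only [hy, if_neg (not_le.2 hc)]
      rw [hid₂ (t - τ₁) ht₂, hid₁ τ₁ ⟨hτ₁, le_refl _⟩]
      abel

end Aux

namespace Aux

lemma _root_.Setting.traj_reg' {d : ℕ} (S : Setting d) {K : Set (Pt d)}
    (hK : K ⊆ closure S.Ω) {σ τ : ℝ} {x : Pt d} {y α : ℝ → Pt d}
    (h : IsTrajCtrl K S.f σ x τ y α) (hσ : |σ| = 1) :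
    (∀ t ∈ Icc (0:ℝ) τ, IntervalIntegrable (fun s => (σ * S.f (y s) (α s)) • α s) volume 0 t)
    ∧ ContinuousOn y (Icc 0 τ) :=
  S.traj_reg hK hσ h.1 h.2.2.1 h.2.2.2.1.1 h.2.2.2.1.2
    (fun u hu => by rw [h.2.1]; exact h.2.2.2.2 u hu)

end Aux


/-- For `0 < μ < η` and a continuous `G` approximating `F_v` within `μ` on
`cl(O_η)`, the regularized sublevel set `O^μ_η` contains `Γ*` in its closure, and the value
functions constrained to `cl(O^μ_η)` coincide with the unconstrained ones on `Γ*`. -/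
theorem regularized_neighborhood_values {d : ℕ} (S : Setting d)
    (hvd : ContinuousOn S.vd (closure S.Ω)) (hvs : ContinuousOn S.vs (closure S.Ω))
    (hne : S.GammaFwd.Nonempty)
    (μ η : ℝ) (hμ0 : 0 < μ) (hμη : μ < η)
    (G : Pt d → ℝ) (hGcont : ContinuousOn G (closure S.Ω))
    (hGapp : ∀ x ∈ closure (S.Oset η), |G x - S.Fv x| ≤ μ)
    (Omueta : Set (Pt d))
    (hOdef : Omueta = {x ∈ S.Ω \ (S.Ksrc ∪ S.Kdst) | G x < sInf (S.Fv '' S.Ω) + η}) :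
    S.GammaFwd ⊆ closure Omueta ∧
    ∀ x ∈ S.GammaFwd,
      S.vsC (closure Omueta) x = S.vs x ∧ S.vdC (closure Omueta) x = S.vd x := by
  classical
  have hημ : 0 < η - μ := by linarith
  have hFvc : ContinuousOn S.Fv (closure S.Ω) := by
    have e : S.Fv = fun x => S.vs x + S.vd x - S.vs x * S.vd x := rfl
    rw [e]
    exact (hvs.add hvd).sub (hvs.mul hvd)
  have hOsub : Omueta ⊆ S.Ω := by rw [hOdef]; exact fun z hz => hz.1.1
  have hKsub : closure Omueta ⊆ closure S.Ω :=
    closure_minimal (hOsub.trans subset_closure) isClosed_closure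
  have main : ∀ p ∈ S.GammaFwd, p ∈ closure Omueta ∧
      S.vsC (closure Omueta) p = S.vs p ∧ S.vdC (closure Omueta) p = S.vd p := by
    intro p hp
    simp only [Setting.GammaFwd, mem_iUnion] at hp
    obtain ⟨x₀, hx₀, hpg⟩ := hp
    obtain ⟨τ, y, hyT, hyend, hopt, t, ht, hpt⟩ := hpg
    obtain ⟨α, hctrl⟩ := hyT
    obtain ⟨hx₀K, hx₀min⟩ := hx₀
    have hτ0 : 0 ≤ τ := hctrl.1
    have hy0 : y 0 = x₀ := hctrl.2.1
    have hyK : ∀ u ∈ Icc 0 τ, y u ∈ closure S.Ω := hctrl.2.2.1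
    obtain ⟨hInt, hycont⟩ := S.traj_reg' subset_rfl hctrl (by norm_num)
    -- τ is positive
    have hτpos : 0 < τ := by
      rcases eq_or_lt_of_le hτ0 with h0 | h
      · exfalso
        have : y 0 ∈ S.Kdst := by rw [h0]; exact hyend
        rw [hy0] at this
        exact Set.disjoint_left.1 S.hKdisj hx₀K this
      · exact h
    -- tail and reverse-head trajectories
    have htail := fun u (hu : u ∈ Icc (0:ℝ) τ) => Aux.traj_shift hctrl hInt hu
    have hrev := fun u (hu : u ∈ Icc (0:ℝ) τ) => Aux.traj_reverse hctrl hInt hu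
    have htailend : ∀ u, (fun s => y (u + s)) (τ - u) ∈ S.Kdst := by
      intro u
      show y (u + (τ - u)) ∈ S.Kdst
      rw [show u + (τ - u) = τ by ring]
      exact hyend
    have hrevend : ∀ u, (fun s => y (u - s)) u ∈ S.Ksrc := by
      intro u
      show y (u - u) ∈ S.Ksrc
      rw [sub_self, hy0]
      exact hx₀K
    have htailmem : ∀ u ∈ Icc (0:ℝ) τ,
        (τ - u) ∈ reachTimes (closure S.Ω) S.f 1 S.Kdst (y u) := fun u hu =>
      ⟨_, ⟨_, htail u hu⟩, htailend u⟩
    have hrevmem : ∀ u ∈ Icc (0:ℝ) τ,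
        u ∈ reachTimes (closure S.Ω) S.f (-1) S.Ksrc (y u) := fun u hu =>
      ⟨_, ⟨_, hrev u hu⟩, hrevend u⟩
    have hTdx₀ : S.Td x₀ = ENNReal.ofReal τ := hopt.symm
    -- the key concatenation estimate
    have hkey : ∀ z : Pt d, ∀ t₁ ∈ reachTimes (closure S.Ω) S.f (-1) S.Ksrc z,
        ∀ t₂ ∈ reachTimes (closure S.Ω) S.f 1 S.Kdst z,
        ENNReal.ofReal τ ≤ ENNReal.ofReal t₁ + ENNReal.ofReal t₂ := by
      intro z t₁ ht₁ t₂ ht₂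
      obtain ⟨z₁, ⟨β₁, hz₁⟩, hz₁end⟩ := ht₁
      obtain ⟨z₂, ⟨β₂, hz₂⟩, hz₂end⟩ := ht₂
      have ht₁0 : 0 ≤ t₁ := hz₁.1
      have hI₁ := (S.traj_reg' subset_rfl hz₁ (by norm_num)).1
      have hI₂ := (S.traj_reg' subset_rfl hz₂ (by norm_num)).1
      have hrev₁ := Aux.traj_reverse hz₁ hI₁ (t := t₁) ⟨ht₁0, le_refl _⟩
      rw [neg_neg] at hrev₁
      have hIrev₁ := (S.traj_reg' subset_rfl hrev₁ (by norm_num)).1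
      have hz₂' : IsTrajCtrl (closure S.Ω) S.f 1 ((fun s => z₁ (t₁ - s)) t₁) t₂ z₂ β₂ := by
        have e : (fun s => z₁ (t₁ - s)) t₁ = z := by
          show z₁ (t₁ - t₁) = z
          rw [sub_self, hz₁.2.1]
        rw [e]
        exact hz₂
      obtain ⟨w, hwT, hwend⟩ := Aux.traj_concat hrev₁ hz₂' hIrev₁ hI₂
      have hw : S.Td (z₁ t₁) ≤ ENNReal.ofReal (t₁ + t₂) :=
        Aux.minTime_le ⟨w, hwT, by rw [hwend]; exact hz₂end⟩
      have h1 : S.Td x₀ ≤ S.Td (z₁ t₁) := by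
        have h2 := hx₀min (z₁ t₁) hz₁end
        rw [show S.vd x₀ = 1 - Aux.expNeg (S.Td x₀) from Aux.kruzkov_eq _,
          show S.vd (z₁ t₁) = 1 - Aux.expNeg (S.Td (z₁ t₁)) from Aux.kruzkov_eq _] at h2
        exact Aux.le_of_expNeg_le (by linarith)
      calc ENNReal.ofReal τ = S.Td x₀ := hTdx₀.symm
        _ ≤ S.Td (z₁ t₁) := h1
        _ ≤ ENNReal.ofReal (t₁ + t₂) := hw
        _ ≤ ENNReal.ofReal t₁ + ENNReal.ofReal t₂ := ENNReal.ofReal_add_le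
    -- exact values of Ts and Td along the geodesic
    have hTs : ∀ u ∈ Icc (0:ℝ) τ, S.Ts (y u) = ENNReal.ofReal u := by
      intro u hu
      refine le_antisymm (Aux.minTime_le (hrevmem u hu)) (Aux.le_minTime fun t₁ ht₁ => ?_)
      have ht₁0 : 0 ≤ t₁ := by
        obtain ⟨_, ⟨_, hh⟩, _⟩ := ht₁
        exact hh.1
      have h2 := hkey (y u) t₁ ht₁ (τ - u) (htailmem u hu)
      rw [← ENNReal.ofReal_add ht₁0 (by linarith [hu.2])] at h2
      have h3 := (ENNReal.ofReal_le_ofReal_iff (by linarith [hu.2])).1 h2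
      exact ENNReal.ofReal_le_ofReal (by linarith)
    have hTd : ∀ u ∈ Icc (0:ℝ) τ, S.Td (y u) = ENNReal.ofReal (τ - u) := by
      intro u hu
      refine le_antisymm (Aux.minTime_le (htailmem u hu)) (Aux.le_minTime fun t₂ ht₂ => ?_)
      have ht₂0 : 0 ≤ t₂ := by
        obtain ⟨_, ⟨_, hh⟩, _⟩ := ht₂
        exact hh.1
      have h2 := hkey (y u) u (hrevmem u hu) t₂ ht₂
      rw [← ENNReal.ofReal_add hu.1 ht₂0] at h2
      have h3 := (ENNReal.ofReal_le_ofReal_iff (by linarith [hu.1])).1 h2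
      exact ENNReal.ofReal_le_ofReal (by linarith)
    -- value of Fv along the geodesic
    have hFvy : ∀ u ∈ Icc (0:ℝ) τ, S.Fv (y u) = 1 - Real.exp (-τ) := by
      intro u hu
      have e1 : S.vs (y u) = 1 - Real.exp (-u) := by
        rw [show S.vs (y u) = 1 - Aux.expNeg (S.Ts (y u)) from Aux.kruzkov_eq _,
          hTs u hu, Aux.expNeg_ofReal hu.1]
      have e2 : S.vd (y u) = 1 - Real.exp (-(τ - u)) := by
        rw [show S.vd (y u) = 1 - Aux.expNeg (S.Td (y u)) from Aux.kruzkov_eq _,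
          hTd u hu, Aux.expNeg_ofReal (by linarith [hu.2])]
      show S.vs (y u) + S.vd (y u) - S.vs (y u) * S.vd (y u) = 1 - Real.exp (-τ)
      rw [e1, e2,
        show (1 - Real.exp (-u)) + (1 - Real.exp (-(τ - u)))
          - (1 - Real.exp (-u)) * (1 - Real.exp (-(τ - u)))
          = 1 - Real.exp (-u) * Real.exp (-(τ - u)) by ring,
        ← Real.exp_add, show -u + -(τ - u) = -τ by ring]
    -- lower bound on m
    have hmge : 1 - Real.exp (-τ) ≤ sInf (S.Fv '' S.Ω) := by
      refine le_csInf (S.hΩne.image _) ?_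
      rintro b ⟨z, hz, rfl⟩
      have hTT : ENNReal.ofReal τ ≤ S.Ts z + S.Td z := by
        have e : S.Ts z + S.Td z = ⨅ t₁ ∈ reachTimes (closure S.Ω) S.f (-1) S.Ksrc z,
            ⨅ t₂ ∈ reachTimes (closure S.Ω) S.f 1 S.Kdst z,
            (ENNReal.ofReal t₁ + ENNReal.ofReal t₂) := by
          rw [Setting.Ts, Setting.Td, minTime, minTime, ENNReal.iInf_add]
          refine iInf_congr fun t₁ => ?_
          rw [ENNReal.iInf_add]
          refine iInf_congr fun h₁ => ?_
          rw [ENNReal.add_iInf]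
          refine iInf_congr fun t₂ => ?_
          rw [ENNReal.add_iInf]
        rw [e]
        exact le_iInf fun t₁ => le_iInf fun h₁ => le_iInf fun t₂ => le_iInf fun h₂ =>
          hkey z t₁ h₁ t₂ h₂
      have h4 : Aux.expNeg (S.Ts z + S.Td z) ≤ Real.exp (-τ) := by
        have h5 := Aux.expNeg_anti hTT
        rwa [Aux.expNeg_ofReal hτ0] at h5
      rw [Aux.expNeg_add] at h4
      show (1 : ℝ) - Real.exp (-τ) ≤ S.vs z + S.vd z - S.vs z * S.vd z
      have e1 : S.vs z = 1 - Aux.expNeg (S.Ts z) := Aux.kruzkov_eq _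
      have e2 : S.vd z = 1 - Aux.expNeg (S.Td z) := Aux.kruzkov_eq _
      rw [e1, e2]
      nlinarith [Aux.expNeg_nonneg (S.Ts z), Aux.expNeg_nonneg (S.Td z)]
    -- interior geodesic points avoid Ksrc and Kdst
    have hnotK : ∀ u ∈ Ioo (0:ℝ) τ, y u ∉ S.Ksrc ∪ S.Kdst := by
      intro u hu hmem
      have huI : u ∈ Icc (0:ℝ) τ := ⟨hu.1.le, hu.2.le⟩
      rcases hmem with hmem | hmem
      · have h1 := hx₀min (y u) hmem
        rw [show S.vd x₀ = 1 - Aux.expNeg (S.Td x₀) from Aux.kruzkov_eq _, hTdx₀,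
          Aux.expNeg_ofReal hτ0,
          show S.vd (y u) = 1 - Aux.expNeg (S.Td (y u)) from Aux.kruzkov_eq _, hTd u huI,
          Aux.expNeg_ofReal (by linarith [hu.2])] at h1
        have h2 := Real.exp_le_exp.1 (by linarith : Real.exp (-(τ - u)) ≤ Real.exp (-τ))
        linarith [hu.1]
      · have h0 : (0:ℝ) ∈ reachTimes (closure S.Ω) S.f 1 S.Kdst (y u) :=
          Aux.zero_mem_reachTimes S.hd (hyK u huI) hmem
        have h2 : S.Td (y u) ≤ 0 := by simpa [Setting.Td] using Aux.minTime_le h0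
        rw [hTd u huI] at h2
        have h3 : τ - u ≤ 0 := ENNReal.ofReal_eq_zero.1 (le_zero_iff.1 h2)
        linarith [hu.2]
    -- interior geodesic points are in the closure of Omueta
    have hIoo : ∀ u ∈ Ioo (0:ℝ) τ, y u ∈ closure Omueta := by
      intro u hu
      have huI : u ∈ Icc (0:ℝ) τ := ⟨hu.1.le, hu.2.le⟩
      have hyΩ : y u ∈ closure S.Ω := hyK u huI
      rw [Metric.mem_closure_iff]
      intro ε hε
      have hcw : ContinuousWithinAt S.Fv (closure S.Ω) (y u) := hFvc (y u) hyΩ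
      rw [Metric.continuousWithinAt_iff] at hcw
      obtain ⟨δ, hδ0, hδ⟩ := hcw (η - μ) hημ
      have hopen : IsOpen ((S.Ksrc ∪ S.Kdst)ᶜ) :=
        (S.hKsrcComp.isClosed.union S.hKdstComp.isClosed).isOpen_compl
      obtain ⟨δ₂, hδ₂0, hδ₂⟩ := Metric.isOpen_iff.1 hopen (y u) (hnotK u hu)
      set r := min ε (min δ δ₂) with hr
      have hr0 : 0 < r := lt_min hε (lt_min hδ0 hδ₂0)
      obtain ⟨z, hzΩ, hzd⟩ := Metric.mem_closure_iff.1 hyΩ r hr0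
      have hzd' : dist z (y u) < r := by rwa [dist_comm] at hzd
      have hz1 : z ∉ S.Ksrc ∪ S.Kdst := by
        apply hδ₂
        rw [Metric.mem_ball]
        exact lt_of_lt_of_le hzd' (le_trans (min_le_right _ _) (min_le_right _ _))
      have hz2 : |S.Fv z - S.Fv (y u)| < η - μ := by
        have h6 := hδ (subset_closure hzΩ)
          (lt_of_lt_of_le hzd' (le_trans (min_le_right _ _) (min_le_left _ _)))
        rwa [Real.dist_eq] at h6
      have hFvz : S.Fv z < sInf (S.Fv '' S.Ω) + (η - μ) := by
        have h3 : S.Fv (y u) = 1 - Real.exp (-τ) := hFvy u huI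
        have h7 := (abs_lt.1 hz2).2
        linarith [hmge]
      have hzO : z ∈ S.Oset η := by
        simp only [Setting.Oset, Set.mem_sep_iff]
        exact ⟨⟨hzΩ, hz1⟩, by linarith⟩
      have hGz : G z < sInf (S.Fv '' S.Ω) + η := by
        have h8 := (abs_le.1 (hGapp z (subset_closure hzO))).2
        linarith
      refine ⟨z, ?_, lt_of_lt_of_le hzd (min_le_left _ _)⟩
      rw [hOdef]
      exact ⟨⟨hzΩ, hz1⟩, hGz⟩
    -- all geodesic points are in the closure of Omueta
    have hIcc : ∀ u ∈ Icc (0:ℝ) τ, y u ∈ closure Omueta := by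
      intro u hu
      have h1 : closure (Ioo (0:ℝ) τ) = Icc 0 τ := closure_Ioo (ne_of_lt hτpos)
      have h2 : y u ∈ y '' closure (Ioo 0 τ) := ⟨u, by rw [h1]; exact hu, rfl⟩
      have h3 : y '' closure (Ioo 0 τ) ⊆ closure (y '' Ioo 0 τ) := by
        apply ContinuousOn.image_closure
        rw [h1]
        exact hycont
      have h4 : closure (y '' Ioo 0 τ) ⊆ closure Omueta :=
        closure_minimal (by rintro q ⟨u', hu', rfl⟩; exact hIoo u' hu') isClosed_closure
      exact h4 (h3 h2)
    subst hpt
    refine ⟨hIcc t ht, ?_, ?_⟩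
    · -- vsC = vs
      have hrevC : IsTrajCtrl (closure Omueta) S.f (-1) (y t) t
          (fun s => y (t - s)) (fun s => α (t - s)) := by
        obtain ⟨a1, a2, _, a4, a5⟩ := hrev t ht
        exact ⟨a1, a2, fun s hs =>
          hIcc (t - s) ⟨by linarith [hs.2], by linarith [hs.1, ht.2]⟩, a4, a5⟩
      have h5 : minTime (closure Omueta) S.f (-1) S.Ksrc (y t) ≤ ENNReal.ofReal t :=
        Aux.minTime_le ⟨_, ⟨_, hrevC⟩, hrevend t⟩
      have heq : minTime (closure Omueta) S.f (-1) S.Ksrc (y t)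
          = minTime (closure S.Ω) S.f (-1) S.Ksrc (y t) :=
        le_antisymm (h5.trans (hTs t ht).ge) (Aux.minTime_anti hKsub)
      show kruzkov (minTime (closure Omueta) S.f (-1) S.Ksrc (y t))
        = kruzkov (minTime (closure S.Ω) S.f (-1) S.Ksrc (y t))
      rw [heq]
    · -- vdC = vd
      have htailC : IsTrajCtrl (closure Omueta) S.f 1 (y t) (τ - t)
          (fun s => y (t + s)) (fun s => α (t + s)) := by
        obtain ⟨a1, a2, _, a4, a5⟩ := htail t ht
        exact ⟨a1, a2, fun s hs =>
          hIcc (t + s) ⟨by linarith [hs.1, ht.1], by linarith [hs.2]⟩, a4, a5⟩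
      have h5 : minTime (closure Omueta) S.f 1 S.Kdst (y t) ≤ ENNReal.ofReal (τ - t) :=
        Aux.minTime_le ⟨_, ⟨_, htailC⟩, htailend t⟩
      have heq : minTime (closure Omueta) S.f 1 S.Kdst (y t)
          = minTime (closure S.Ω) S.f 1 S.Kdst (y t) :=
        le_antisymm (h5.trans (hTd t ht).ge) (Aux.minTime_anti hKsub)
      show kruzkov (minTime (closure Omueta) S.f 1 S.Kdst (y t))
        = kruzkov (minTime (closure S.Ω) S.f 1 S.Kdst (y t))
      rw [heq]
  exact ⟨fun p hp => (main p hp).1, fun p hp => ⟨(main p hp).2.1, (main p hp).2.2⟩⟩
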